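/- arXiv:1809.05607 — 3 statements merged into one kernel-verified Lean document; each statement's English description precedes it below -/
import Mathlib

section
/- For any complex-valued function g in L²(a,b) with a < b real, the real part of the inner product (J⁺g, g) equals (1/2)|∫ₐᵇ g(x) dx|², where (J⁺g)(x) = ∫ₐˣ g(t) dt and the inner product is (f,g) = ∫ₐᵇ conj(f(x)) g(x) dx. In particular, Re(J⁺g, g) ≥ 0. -/
open MeasureTheory Set

theorem stmt_0 (a b : ℝ) (hab : a < b) (g : ℝ → ℂ)
    (hg : MemLp g 2 (volume.restrict (Ioo a b))) :
    (∫ x in Ioo a b, (starRingEnd ℂ) (∫ t in a..x, g t) * g x).re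
      = (1 / 2) * ‖∫ x in Ioo a b, g x‖ ^ 2 ∧
    0 ≤ (∫ x in Ioo a b, (starRingEnd ℂ) (∫ t in a..x, g t) * g x).re := by
  set μ := volume.restrict (Ioo a b) with hμ
  haveI hfin : IsFiniteMeasure μ := by
    constructor
    rw [hμ, Measure.restrict_apply_univ, Real.volume_Ioo]
    exact ENNReal.ofReal_lt_top
  have hgi : Integrable g μ := hg.integrable (by norm_num)
  have hgc : Integrable (fun t => (starRingEnd ℂ) (g t)) μ :=
    ⟨continuous_star.comp_aestronglyMeasurable hgi.1, by
      simpa [HasFiniteIntegral] using hgi.2⟩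
  set K : ℝ × ℝ → ℂ := fun p => g p.1 * (starRingEnd ℂ) (g p.2) with hK
  have hKi : Integrable K (μ.prod μ) := hgi.mul_prod hgc
  set S : Set (ℝ × ℝ) := {p | p.2 < p.1} with hS
  have hSm : MeasurableSet S := measurableSet_lt measurable_snd measurable_fst
  set L : ℂ := ∫ x in Ioo a b, (starRingEnd ℂ) (∫ t in a..x, g t) * g x with hL
  -- Step 1: L = ∫ p in S, K p ∂(μ.prod μ)
  have h1 : L = ∫ p in S, K p ∂(μ.prod μ) := by
    have hind : Integrable (S.indicator K) (μ.prod μ) := hKi.indicator hSm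
    rw [← integral_indicator hSm, integral_prod _ hind, hL]
    refine integral_congr_ae ?_
    filter_upwards [ae_restrict_mem measurableSet_Ioo] with x hx
    have hinner : ∀ t, S.indicator K (x, t) = (Iio x).indicator (fun t => K (x, t)) t := by
      intro t
      simp [Set.indicator_apply, hS, Set.mem_Iio]
    simp_rw [hinner]
    rw [integral_indicator measurableSet_Iio]
    have hres : μ.restrict (Iio x) = volume.restrict (Ioo a x) := by
      rw [hμ, Measure.restrict_restrict measurableSet_Iio]
      congr 1
      ext t
      simp only [mem_inter_iff, mem_Iio, mem_Ioo]
      constructor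
      · rintro ⟨h1, h2, h3⟩; exact ⟨h2, h1⟩
      · rintro ⟨h1, h2⟩; exact ⟨h2, h1, h2.trans hx.2⟩
    rw [hres]
    have : ∫ t in a..x, g t = ∫ t in Ioo a x, g t := by
      rw [intervalIntegral.integral_of_le hx.1.le, integral_Ioc_eq_integral_Ioo]
    rw [this, ← integral_conj, mul_comm, ← integral_const_mul]
  -- swap: conj L = ∫ p in Sᶜ-ish
  set S' : Set (ℝ × ℝ) := {p | p.1 < p.2} with hS'
  have hS'm : MeasurableSet S' := measurableSet_lt measurable_fst measurable_snd
  have h2 : (starRingEnd ℂ) L = ∫ p in S', K p ∂(μ.prod μ) := by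
    rw [h1, ← integral_conj]
    have hswap : ∫ p in S', K p ∂(μ.prod μ)
        = ∫ p in Prod.swap ⁻¹' S', K (Prod.swap p) ∂(μ.prod μ) :=
      (Measure.measurePreserving_swap.setIntegral_preimage_emb
        MeasurableEquiv.prodComm.measurableEmbedding _ _).symm
    rw [hswap]
    have hset : Prod.swap ⁻¹' S' = S := by
      ext p; simp [hS, hS']
    rw [hset]
    refine setIntegral_congr_fun hSm ?_
    intro p _
    simp [hK, mul_comm]
  -- diagonal is null
  have hdiag : (μ.prod μ) {p : ℝ × ℝ | p.1 = p.2} = 0 := by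
    have hm : MeasurableSet {p : ℝ × ℝ | p.1 = p.2} :=
      measurableSet_eq_fun measurable_fst measurable_snd
    rw [Measure.prod_apply hm]
    have : ∀ x : ℝ, μ (Prod.mk x ⁻¹' {p : ℝ × ℝ | p.1 = p.2}) = 0 := by
      intro x
      have : Prod.mk x ⁻¹' {p : ℝ × ℝ | p.1 = p.2} = {x} := by
        ext t; simp [eq_comm]
      rw [this]
      refine measure_mono_null (subset_refl _) ?_
      rw [hμ]
      exact le_antisymm ((Measure.restrict_le_self _).trans_eq (Real.volume_singleton)) bot_le
    simp_rw [this]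
    simp
  -- Sᶜ =ᵐ S'
  have hcompl : (Sᶜ : Set (ℝ × ℝ)) =ᵐ[μ.prod μ] S' := by
    refine (ae_eq_set.mpr ⟨?_, ?_⟩)
    · refine measure_mono_null ?_ hdiag
      intro p hp
      simp only [mem_diff, mem_compl_iff, hS, hS', mem_setOf_eq, not_lt] at hp
      exact le_antisymm hp.1 hp.2
    · refine measure_mono_null ?_ hdiag
      intro p hp
      simp only [mem_diff, mem_compl_iff, hS, hS', mem_setOf_eq, not_lt] at hp
      exact absurd hp.2 (not_not.mpr hp.1.le)
  have h3 : L + (starRingEnd ℂ) L = ∫ p, K p ∂(μ.prod μ) := by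
    rw [h2, h1, ← setIntegral_congr_set hcompl]
    exact integral_add_compl hSm hKi
  have h4 : ∫ p, K p ∂(μ.prod μ)
      = (∫ x, g x ∂μ) * (starRingEnd ℂ) (∫ x, g x ∂μ) := by
    rw [← integral_conj]
    exact integral_prod_mul g (fun t => (starRingEnd ℂ) (g t))
  have h5 : (2 * L.re : ℝ) = ‖∫ x, g x ∂μ‖ ^ 2 := by
    have := congrArg Complex.re (h3.trans h4)
    rw [Complex.add_conj] at this
    simp only [Complex.ofReal_re] at this
    rw [this, Complex.mul_conj]
    simp [Complex.sq_norm]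
  constructor
  · linarith [h5]
  · nlinarith [h5, sq_nonneg (‖∫ x, g x ∂μ‖)]
end

section
/- Let f : ℝ → ℂ be integrable on (0,∞) and let F(x) = ∫₀^∞ e^{ixy} f(y) dy be its Fourier transform. If f is real-valued and F is differentiable on [0,∞) with |F(x)| → 0 as x → ∞, then the imaginary part of ∫₀^∞ conj(i·F′(x)) · F(x) dx equals (1/2)(∫₀^∞ f(y) dy)². -/
open MeasureTheory Set Filter

theorem stmt_4 (f : ℝ → ℝ) (hf : IntegrableOn f (Ioi 0))
    (F F' : ℝ → ℂ)
    (hF : ∀ x, F x = ∫ y in Ioi (0:ℝ), Complex.exp (Complex.I * x * y) * (f y : ℂ))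
    (hF' : ∀ x ≥ (0:ℝ), HasDerivAt F (F' x) x)
    (hlim : Tendsto (fun x => ‖F x‖) atTop (nhds 0))
    (hint : IntegrableOn (fun x => (starRingEnd ℂ) (Complex.I * F' x) * F x) (Ioi 0)) :
    (∫ x in Ioi (0:ℝ), (starRingEnd ℂ) (Complex.I * F' x) * F x).im
      = (1 / 2) * (∫ y in Ioi (0:ℝ), f y) ^ 2 := by
  set g : ℝ → ℝ := fun x => (F x * (starRingEnd ℂ) (F x)).re with hg
  set g' : ℝ → ℝ := fun x => (F' x * (starRingEnd ℂ) (F x) + F x * (starRingEnd ℂ) (F' x)).re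
    with hg'
  -- pointwise identity
  have key : ∀ x, ((starRingEnd ℂ) (Complex.I * F' x) * F x).im = -(1/2) * g' x := by
    intro x
    simp [hg', Complex.mul_im, Complex.mul_re, Complex.add_re]
    ring
  -- derivative of g
  have hderiv : ∀ x ∈ Ici (0:ℝ), HasDerivAt g (g' x) x := by
    intro x hx
    have h := (hF' x hx).mul (hF' x hx).star
    have h2 := Complex.reCLM.hasFDerivAt.comp_hasDerivAt x h
    exact h2
  -- integrability of g'
  have hg'int : IntegrableOn g' (Ioi 0) := by
    have : g' = fun x => (-2 : ℝ) * ((starRingEnd ℂ) (Complex.I * F' x) * F x).im := by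
      funext x; rw [key x]; ring
    rw [this]
    exact hint.im.const_mul _
  -- g tends to 0
  have hgz : g = fun x => ‖F x‖ ^ 2 := by
    funext x
    simp [hg, Complex.mul_conj, Complex.normSq_eq_norm_sq, ← Complex.ofReal_pow]
  have hgt : Tendsto g atTop (nhds 0) := by
    rw [hgz]
    simpa using (hlim.pow 2)
  have hFTC : ∫ x in Ioi (0:ℝ), g' x = 0 - g 0 :=
    integral_Ioi_of_hasDerivAt_of_tendsto' hderiv hg'int hgt
  -- value of g 0
  have hF0 : F 0 = ((∫ y in Ioi (0:ℝ), f y : ℝ) : ℂ) := by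
    rw [hF 0]
    simp only [Complex.ofReal_zero, mul_zero, zero_mul, Complex.exp_zero, one_mul]
    exact integral_ofReal
  have hg0 : g 0 = (∫ y in Ioi (0:ℝ), f y) ^ 2 := by
    simp only [hgz, hF0, Complex.norm_real, Real.norm_eq_abs]
    exact sq_abs _
  calc (∫ x in Ioi (0:ℝ), (starRingEnd ℂ) (Complex.I * F' x) * F x).im
      = ∫ x in Ioi (0:ℝ), ((starRingEnd ℂ) (Complex.I * F' x) * F x).im :=
        (integral_im hint).symm
    _ = ∫ x in Ioi (0:ℝ), (-(1/2)) * g' x := by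
        exact integral_congr_ae (Filter.Eventually.of_forall fun x => key x)
    _ = (-(1/2)) * ∫ x in Ioi (0:ℝ), g' x := by rw [integral_const_mul]
    _ = (1 / 2) * (∫ y in Ioi (0:ℝ), f y) ^ 2 := by rw [hFTC, hg0]; ring
end

section
/- If k(x) = −e^{−x} for x > −1 and k(x) = 0 for x ≤ −1, and g(t) = 2e^{−1/2}·t·e^{t²−t}, then the function f(t) = g(t) − sinh(1/2)·e^{−t} solves the integral equation f(x) − ∫₀¹ k(x−t) f(t) dt = g(x) for all x ∈ (0,1). -/
open Set

theorem stmt_13 (k : ℝ → ℝ) (hk : ∀ u, k u = if -1 < u then -Real.exp (-u) else 0)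
    (g f : ℝ → ℝ)
    (hg : ∀ t, g t = 2 * Real.exp (-(1/2)) * t * Real.exp (t ^ 2 - t))
    (hf : ∀ t, f t = g t - Real.sinh (1/2) * Real.exp (-t)) :
    ∀ x ∈ Ioo (0:ℝ) 1, f x - ∫ t in (0:ℝ)..1, k (x - t) * f t = g x := by
  intro x hx
  obtain ⟨hx0, hx1⟩ := hx
  have hcongr : (∫ t in (0:ℝ)..1, k (x - t) * f t)
      = ∫ t in (0:ℝ)..1, (-Real.exp (t - x)) *
          (2 * Real.exp (-(1/2)) * t * Real.exp (t ^ 2 - t)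
            - Real.sinh (1/2) * Real.exp (-t)) := by
    apply intervalIntegral.integral_congr
    intro t ht
    rw [Set.uIcc_of_le (by norm_num : (0:ℝ) ≤ 1)] at ht
    have h1 : -1 < x - t := by nlinarith [ht.2]
    simp only [hk, hf, hg, if_pos h1]
    ring_nf
  have key : (∫ t in (0:ℝ)..1, (-Real.exp (t - x)) *
          (2 * Real.exp (-(1/2)) * t * Real.exp (t ^ 2 - t)
            - Real.sinh (1/2) * Real.exp (-t)))
      = (Real.exp (-x) * (Real.sinh (1/2) * 1 - Real.exp (-(1/2)) * Real.exp ((1:ℝ)^2)))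
        - (Real.exp (-x) * (Real.sinh (1/2) * 0 - Real.exp (-(1/2)) * Real.exp ((0:ℝ)^2))) := by
    apply intervalIntegral.integral_eq_sub_of_hasDerivAt
      (f := fun t : ℝ => Real.exp (-x) *
        (Real.sinh (1/2) * t - Real.exp (-(1/2)) * Real.exp (t ^ 2)))
    · intro t ht
      have hd : HasDerivAt (fun t : ℝ => Real.exp (-x) *
          (Real.sinh (1/2) * t - Real.exp (-(1/2)) * Real.exp (t ^ 2)))
          (Real.exp (-x) * (Real.sinh (1/2) * 1
            - Real.exp (-(1/2)) * (Real.exp (t ^ 2) * (2 * t)))) t := by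
        apply HasDerivAt.const_mul
        apply HasDerivAt.sub
        · simpa using (hasDerivAt_id t).const_mul (Real.sinh (1/2))
        · apply HasDerivAt.const_mul
          have := (hasDerivAt_pow 2 t).exp
          simpa [mul_comm, mul_assoc, mul_left_comm] using this
      convert hd using 1
      any_goals with_reducible_and_instances rfl
      rw [Real.sinh_eq, show t - x = -x + t by ring, show t ^ 2 - t = t ^ 2 + -t by ring,
        Real.exp_add, Real.exp_add, Real.exp_neg t]
      field_simp
      ring
    · apply Continuous.intervalIntegrable
      fun_prop
  rw [hcongr, key, hf x]
  have e4 : Real.exp (-(1/2:ℝ)) * Real.exp 1 = Real.exp (1/2) := by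
    rw [← Real.exp_add]; norm_num
  have e5 : Real.sinh (1/2:ℝ) = (Real.exp (1/2) - Real.exp (-(1/2))) / 2 := by
    rw [Real.sinh_eq]
  norm_num
  nlinarith [e4, e5, Real.exp_pos (-x)]
end
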